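/- If binary random variables Ŷ, Y, S (with all eight joint probabilities positive) satisfy both equality of opportunity and predictive equality via a single reweighing scheme — i.e., there exists a weight function w(y) depending only on ŷ such that w equals both w_EOp(y,s) = Pr(Ŷ=y)/Pr(Ŷ=y|S=s,Y=1) and w_PE(y,s) = Pr(Ŷ=y)/Pr(Ŷ=y|S=s,Y=0) for all y,s — then Pr(Ŷ=y|S=s,Y=1) = Pr(Ŷ=y|S=s,Y=0) · (Pr(Ŷ=y|S=s',Y=1)/Pr(Ŷ=y|S=s',Y=0)) for all y, s, s'; in particular, the two reweighing schemes coincide only when the conditional distributions satisfy this compatibility condition, and in general w_EOp ≠ w_PE. -/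

import Mathlib

open Finset

/-- Obstruction to a single reweighing scheme for equalized odds.
`p yh y s` is the joint mass of `(Ŷ = yh, Y = y, S = s)` for binary variables
with all eight joint probabilities positive.  If a single weight function
`w(ŷ)` equals both the equality-of-opportunity weights
`Pr(Ŷ=ŷ)/Pr(Ŷ=ŷ|S=s,Y=1)` and the predictive-equality weights
`Pr(Ŷ=ŷ)/Pr(Ŷ=ŷ|S=s,Y=0)` for all `ŷ, s`, then
`Pr(Ŷ=ŷ|S=s,Y=1) = Pr(Ŷ=ŷ|S=s,Y=0) · (Pr(Ŷ=ŷ|S=s',Y=1)/Pr(Ŷ=ŷ|S=s',Y=0))`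
for all `ŷ, s, s'`. -/
theorem single_reweighing_for_equalized_odds_compatibility
    (p : Bool → Bool → Bool → ℝ) (hpos : ∀ yh y s, 0 < p yh y s)
    (hsum : ∑ yh, ∑ y, ∑ s, p yh y s = 1)
    (PYh : Bool → ℝ) (hPYh : ∀ yh, PYh yh = ∑ y, ∑ s, p yh y s)
    -- c1 yh s = Pr(Ŷ=yh | S=s, Y=1),  c0 yh s = Pr(Ŷ=yh | S=s, Y=0)
    (c1 c0 : Bool → Bool → ℝ)
    (hc1 : ∀ yh s, c1 yh s = p yh true s / (∑ yh', p yh' true s))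
    (hc0 : ∀ yh s, c0 yh s = p yh false s / (∑ yh', p yh' false s))
    (w : Bool → ℝ)
    (hwEOp : ∀ yh s, w yh = PYh yh / c1 yh s)
    (hwPE : ∀ yh s, w yh = PYh yh / c0 yh s) :
    ∀ yh s s', c1 yh s = c0 yh s * (c1 yh s' / c0 yh s') := by
  have hden1 : ∀ s, 0 < ∑ yh', p yh' true s := fun s =>
    Finset.sum_pos (fun i _ => hpos i true s) ⟨true, Finset.mem_univ _⟩
  have hden0 : ∀ s, 0 < ∑ yh', p yh' false s := fun s =>
    Finset.sum_pos (fun i _ => hpos i false s) ⟨true, Finset.mem_univ _⟩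
  have hc1pos : ∀ yh s, 0 < c1 yh s := fun yh s => by
    rw [hc1]; exact div_pos (hpos yh true s) (hden1 s)
  have hc0pos : ∀ yh s, 0 < c0 yh s := fun yh s => by
    rw [hc0]; exact div_pos (hpos yh false s) (hden0 s)
  have hP : ∀ yh, 0 < PYh yh := fun yh => by
    rw [hPYh]
    exact Finset.sum_pos (fun y _ => Finset.sum_pos (fun s _ => hpos yh y s)
      ⟨true, Finset.mem_univ _⟩) ⟨true, Finset.mem_univ _⟩
  have heq : ∀ yh s, c1 yh s = c0 yh s := fun yh s => by
    have h := (hwEOp yh s).symm.trans (hwPE yh s)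
    have h1 := (hc1pos yh s).ne'
    have h0 := (hc0pos yh s).ne'
    have hp := (hP yh).ne'
    field_simp at h
    exact h.symm
  intro yh s s'
  rw [heq yh s, heq yh s', div_self (ne_of_gt (hc0pos yh s')), mul_one]
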